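/- Let ν ≥ 2 and let A, A₁, A₂ be Hermitian ν×ν complex matrices. Let ψ₀ ∈ ℂ^ν be a unit vector with Aψ₀ = 0 such that 0 is a simple eigenvalue of A (i.e., the kernel of A is spanned by ψ₀), and let ρ = min{|λ| : λ is a nonzero eigenvalue of A} > 0. Suppose there exist vectors ψ₁, ψ₂ ∈ ℂ^ν and a scalar μ ∈ ℂ satisfying A₁ψ₀ + Aψ₁ = 0 and A₂ψ₀ + A₁ψ₁ + Aψ₂ = μψ₀. Then |μ| ≤ ‖A₂‖ + ‖A₁‖²/ρ, where ‖·‖ denotes the operator norm with respect to the Euclidean norm on ℂ^ν. -/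

import Mathlib

open scoped BigOperators Matrix.Norms.L2Operator InnerProductSpace
open Matrix

noncomputable section

private def toE {ν : ℕ} (x : Fin ν → ℂ) : EuclideanSpace ℂ (Fin ν) := WithLp.toLp 2 x

private lemma herm_inner_move {ν : ℕ} {A : Matrix (Fin ν) (Fin ν) ℂ} (hA : A.IsHermitian)
    (x y : EuclideanSpace ℂ (Fin ν)) :
    ⟪toE (A.mulVec x), y⟫_ℂ = ⟪x, toE (A.mulVec y)⟫_ℂ := by
  rw [EuclideanSpace.inner_eq_star_dotProduct, EuclideanSpace.inner_eq_star_dotProduct, dotProduct_comm,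
    dotProduct_comm (WithLp.ofLp (toE (A.mulVec y)))]
  show dotProduct (star (A.mulVec x)) y = dotProduct (star x) (A.mulVec y)
  rw [star_mulVec, ← dotProduct_mulVec, hA.eq]

private lemma inner_toE_smul_left {ν : ℕ} (c : ℂ) (x : Fin ν → ℂ)
    (y : EuclideanSpace ℂ (Fin ν)) :
    ⟪toE (c • x), y⟫_ℂ = (starRingEnd ℂ) c * ⟪toE x, y⟫_ℂ := by
  rw [EuclideanSpace.inner_eq_star_dotProduct, EuclideanSpace.inner_eq_star_dotProduct, dotProduct_comm,
    dotProduct_comm (WithLp.ofLp y)]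
  show dotProduct (star (c • x)) y = (starRingEnd ℂ) c * dotProduct (star x) y
  rw [star_smul, smul_dotProduct]
  rfl

private lemma gap_lemma {ν : ℕ} {A : Matrix (Fin ν) (Fin ν) ℂ} (hA : A.IsHermitian)
    (ψ₀ : EuclideanSpace ℂ (Fin ν))
    (hsimple : ∀ x : Fin ν → ℂ, A.mulVec x = 0 → ∃ c : ℂ, x = c • ψ₀)
    (ρ : ℝ) (hρpos : 0 < ρ)
    (hρ : ∀ (c : ℂ) (x : Fin ν → ℂ), x ≠ 0 → A.mulVec x = c • x → c ≠ 0 →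
      ρ ≤ ‖c‖)
    (φ : EuclideanSpace ℂ (Fin ν)) (hφ : ⟪ψ₀, φ⟫_ℂ = 0) :
    ρ * ‖φ‖ ≤ ‖toE (A.mulVec φ)‖ := by
  set b := hA.eigenvectorBasis with hb
  have heig' : ∀ i, toE (A.mulVec (b i)) = ((hA.eigenvalues i : ℂ)) • b i := by
    intro i
    ext j
    have h := congrFun (hA.mulVec_eigenvectorBasis i) j
    simpa [Complex.real_smul, toE] using h
  have key : ∀ i, ρ * ‖b.repr φ i‖ ≤ ‖b.repr (toE (A.mulVec φ)) i‖ := by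
    intro i
    have hrepr : b.repr (toE (A.mulVec φ)) i = (hA.eigenvalues i : ℂ) * b.repr φ i := by
      rw [b.repr_apply_apply, b.repr_apply_apply, ← herm_inner_move hA, heig' i,
        inner_smul_left]
      congr 1
      simp
    rcases eq_or_ne (hA.eigenvalues i) 0 with h0 | h0
    · have hk : A.mulVec (b i) = 0 := by
        have := heig' i
        rw [h0] at this
        simpa [toE] using congrArg WithLp.ofLp this
      obtain ⟨c, hc⟩ := hsimple (b i) hk
      have hz : b.repr φ i = 0 := by
        rw [b.repr_apply_apply]
        have : (b i : EuclideanSpace ℂ (Fin ν)) = toE (c • (ψ₀ : Fin ν → ℂ)) := congrArg (WithLp.toLp 2) hc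
        rw [this, inner_toE_smul_left]
        have : ⟪toE (ψ₀ : Fin ν → ℂ), φ⟫_ℂ = 0 := hφ
        rw [this, mul_zero]
      rw [hrepr, hz]
      simp
    · have hb0 : (b i : Fin ν → ℂ) ≠ 0 := fun h => b.orthonormal.ne_zero i (by ext j; simpa using congrFun h j)
      have heig : A.mulVec (b i) = ((hA.eigenvalues i : ℂ)) • (b i : Fin ν → ℂ) := congrArg WithLp.ofLp (heig' i)
      have hρi : ρ ≤ ‖(hA.eigenvalues i : ℂ)‖ := by
        apply hρ _ _ hb0 heig
        simpa using h0
      rw [hrepr, norm_mul]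
      exact mul_le_mul_of_nonneg_right hρi (norm_nonneg _)
  have h1 : ‖φ‖ = ‖b.repr φ‖ := (b.repr.norm_map φ).symm
  have h2 : ‖toE (A.mulVec φ)‖ = ‖b.repr (toE (A.mulVec φ))‖ := (b.repr.norm_map _).symm
  rw [h1, h2, EuclideanSpace.norm_eq, EuclideanSpace.norm_eq]
  rw [show ρ = Real.sqrt (ρ ^ 2) by rw [Real.sqrt_sq hρpos.le], ← Real.sqrt_mul (by positivity)]
  apply Real.sqrt_le_sqrt
  rw [Finset.mul_sum]
  apply Finset.sum_le_sum
  intro i _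
  have h := mul_le_mul (key i) (key i) (by positivity) (norm_nonneg _)
  calc ρ ^ 2 * ‖b.repr φ i‖ ^ 2 = (ρ * ‖b.repr φ i‖) * (ρ * ‖b.repr φ i‖) := by ring
    _ ≤ _ := h.trans_eq (by rw [← pow_two])

theorem effective_form_perturbation_bound
    {ν : ℕ} (hν : 2 ≤ ν)
    (A A₁ A₂ : Matrix (Fin ν) (Fin ν) ℂ)
    (hA : A.IsHermitian) (hA₁ : A₁.IsHermitian) (hA₂ : A₂.IsHermitian)
    (ψ₀ : Fin ν → ℂ)
    (hunit : ∑ v, ‖ψ₀ v‖ ^ 2 = 1)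
    (hker : A.mulVec ψ₀ = 0)
    -- `0` is a simple eigenvalue of `A`: the kernel of `A` is spanned by `ψ₀`
    (hsimple : ∀ x : Fin ν → ℂ, A.mulVec x = 0 → ∃ c : ℂ, x = c • ψ₀)
    -- `ρ` is the minimum of `|λ|` over the nonzero eigenvalues `λ` of `A`
    (ρ : ℝ) (hρpos : 0 < ρ)
    (hρ : ∀ (c : ℂ) (x : Fin ν → ℂ), x ≠ 0 → A.mulVec x = c • x → c ≠ 0 →
      ρ ≤ ‖c‖)
    (ψ₁ ψ₂ : Fin ν → ℂ) (μ : ℂ)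
    (heq1 : A₁.mulVec ψ₀ + A.mulVec ψ₁ = 0)
    (heq2 : A₂.mulVec ψ₀ + A₁.mulVec ψ₁ + A.mulVec ψ₂ = μ • ψ₀) :
    ‖μ‖ ≤ ‖A₂‖ + ‖A₁‖ ^ 2 / ρ := by
  classical
  set Ψ₀ : EuclideanSpace ℂ (Fin ν) := toE ψ₀ with hΨ₀
  set Ψ₁ : EuclideanSpace ℂ (Fin ν) := toE ψ₁ with hΨ₁
  have hnorm₀ : ‖Ψ₀‖ = 1 := by
    rw [EuclideanSpace.norm_eq]
    have h : ∀ v, ‖Ψ₀ v‖ = ‖ψ₀ v‖ := fun v => rfl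
    simp_rw [h, hunit, Real.sqrt_one]
  have hinner₀ : ⟪Ψ₀, Ψ₀⟫_ℂ = 1 := by
    have h := inner_self_eq_norm_sq_to_K (𝕜 := ℂ) Ψ₀
    rw [h, hnorm₀]; norm_num
  have hmain : ⟪Ψ₀, toE (A₂.mulVec ψ₀)⟫_ℂ + ⟪Ψ₀, toE (A₁.mulVec ψ₁)⟫_ℂ
      + ⟪Ψ₀, toE (A.mulVec ψ₂)⟫_ℂ = μ := by
    have h := congrArg (fun v : Fin ν → ℂ => ⟪Ψ₀, toE v⟫_ℂ) heq2
    rw [show toE (A₂.mulVec ψ₀ + A₁.mulVec ψ₁ + A.mulVec ψ₂)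
        = toE (A₂.mulVec ψ₀) + toE (A₁.mulVec ψ₁) + toE (A.mulVec ψ₂) from rfl,
      inner_add_right, inner_add_right,
      show toE (μ • ψ₀) = μ • Ψ₀ from rfl, inner_smul_right, hinner₀, mul_one] at h
    exact h
  have hzero : ⟪Ψ₀, toE (A.mulVec ψ₂)⟫_ℂ = 0 := by
    rw [← herm_inner_move hA]
    show dotProduct ψ₂ (star (A.mulVec ψ₀)) = 0
    rw [hker]; simp
  have heq1' : A₁.mulVec ψ₀ = -(A.mulVec ψ₁) := by
    rw [add_eq_zero_iff_eq_neg] at heq1; exact heq1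
  set c : ℂ := ⟪Ψ₀, Ψ₁⟫_ℂ with hc
  set φ : EuclideanSpace ℂ (Fin ν) := Ψ₁ - c • Ψ₀ with hφdef
  have hφorth : ⟪Ψ₀, φ⟫_ℂ = 0 := by
    rw [hφdef, inner_sub_right, inner_smul_right, hinner₀, mul_one, sub_self]
  have hAφ : A.mulVec φ = A.mulVec ψ₁ := by
    show A.mulVec (ψ₁ - c • ψ₀) = A.mulVec ψ₁
    rw [Matrix.mulVec_sub, Matrix.mulVec_smul, hker, smul_zero, sub_zero]
  have hAφ0 : ⟪toE (A.mulVec φ), Ψ₀⟫_ℂ = 0 := by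
    rw [herm_inner_move hA]
    show dotProduct (A.mulVec ψ₀) (star (φ : Fin ν → ℂ)) = 0
    rw [hker]; simp
  have step1 : ⟪Ψ₀, toE (A₁.mulVec ψ₁)⟫_ℂ = ⟪toE (A₁.mulVec ψ₀), Ψ₁⟫_ℂ :=
    (herm_inner_move hA₁ Ψ₀ Ψ₁).symm
  have step2 : toE (A₁.mulVec ψ₀) = -toE (A.mulVec φ) := by
    rw [heq1', ← hAφ]; rfl
  have hterm : ⟪Ψ₀, toE (A₁.mulVec ψ₁)⟫_ℂ = -⟪toE (A.mulVec φ), φ⟫_ℂ := by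
    rw [step1, step2, inner_neg_left]
    congr 1
    rw [show (Ψ₁ : EuclideanSpace ℂ (Fin ν)) = φ + c • Ψ₀ by rw [hφdef]; abel,
      inner_add_right, inner_smul_right, hAφ0, mul_zero, add_zero]
  have hbound₂ : ‖⟪Ψ₀, toE (A₂.mulVec ψ₀)⟫_ℂ‖ ≤ ‖A₂‖ := by
    calc ‖⟪Ψ₀, toE (A₂.mulVec ψ₀)⟫_ℂ‖ ≤ ‖Ψ₀‖ * ‖toE (A₂.mulVec ψ₀)‖ := norm_inner_le_norm _ _
      _ ≤ ‖Ψ₀‖ * (‖A₂‖ * ‖Ψ₀‖) :=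
          mul_le_mul_of_nonneg_left (A₂.l2_opNorm_mulVec Ψ₀) (norm_nonneg _)
      _ = ‖A₂‖ := by rw [hnorm₀]; ring
  have hAφnorm : ‖toE (A.mulVec φ)‖ ≤ ‖A₁‖ := by
    have h : toE (A.mulVec φ) = -toE (A₁.mulVec ψ₀) := by
      rw [hAφ, heq1', show toE (-(A.mulVec ψ₁)) = -toE (A.mulVec ψ₁) from rfl, neg_neg]
    rw [h, norm_neg]
    calc ‖toE (A₁.mulVec ψ₀)‖ ≤ ‖A₁‖ * ‖Ψ₀‖ := A₁.l2_opNorm_mulVec Ψ₀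
      _ = ‖A₁‖ := by rw [hnorm₀, mul_one]
  have hφnorm : ρ * ‖φ‖ ≤ ‖toE (A.mulVec φ)‖ := gap_lemma hA Ψ₀ hsimple ρ hρpos hρ φ hφorth
  have hbound₁ : ‖⟪toE (A.mulVec φ), φ⟫_ℂ‖ ≤ ‖A₁‖ ^ 2 / ρ := by
    have hφle : ‖φ‖ ≤ ‖A₁‖ / ρ := by
      rw [le_div_iff₀ hρpos, mul_comm]
      exact hφnorm.trans hAφnorm
    calc ‖⟪toE (A.mulVec φ), φ⟫_ℂ‖ ≤ ‖toE (A.mulVec φ)‖ * ‖φ‖ := norm_inner_le_norm _ _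
      _ ≤ ‖A₁‖ * (‖A₁‖ / ρ) :=
          mul_le_mul hAφnorm hφle (norm_nonneg _) (norm_nonneg _)
      _ = ‖A₁‖ ^ 2 / ρ := by ring
  have hμ : μ = ⟪Ψ₀, toE (A₂.mulVec ψ₀)⟫_ℂ - ⟪toE (A.mulVec φ), φ⟫_ℂ := by
    rw [← hmain, hzero, hterm]; ring
  rw [show ‖μ‖ = ‖μ‖ from rfl, hμ]
  calc ‖⟪Ψ₀, toE (A₂.mulVec ψ₀)⟫_ℂ - ⟪toE (A.mulVec φ), φ⟫_ℂ‖
      ≤ ‖⟪Ψ₀, toE (A₂.mulVec ψ₀)⟫_ℂ‖ + ‖⟪toE (A.mulVec φ), φ⟫_ℂ‖ := norm_sub_le _ _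
    _ ≤ ‖A₂‖ + ‖A₁‖ ^ 2 / ρ := add_le_add hbound₂ hbound₁

end
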